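/- Let U be open in a complex Banach space E, v a weight on U, F a complex Banach space, p ∈ (1,∞). If f = S∘g where g ∈ H^∞_v(U,G) for a complex Banach space G and S : G → F is a p-compact operator, then the set (vf)(U) = {v(x)f(x) : x ∈ U} is relatively p-compact in F, with m_{K_p}((vf)(U)) ≤ ‖S‖_{K_p}·‖g‖_v. -/
import Mathlib


open scoped BigOperators Classical

noncomputable section

variable {E : Type*} [NormedAddCommGroup E] [NormedSpace ℂ E]

/-- Coefficient sequences: the closed unit ball of `ℓ_{p*}` (where `p* = p/(p-1)`)
for `p > 1`, and the closed unit ball of `c₀` for `p = 1`. -/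
def CoefBall (p : ℝ) (a : ℕ → ℂ) : Prop :=
  if p = 1 then
    Filter.Tendsto (fun n => ‖a n‖) Filter.atTop (nhds 0) ∧ ∀ n, ‖a n‖ ≤ 1
  else
    ∀ s : Finset ℕ, ∑ n ∈ s, ‖a n‖ ^ (p / (p - 1)) ≤ 1

/-- The `p`-convex hull of a sequence `(x_n)`: all convergent sums `∑ a_n x_n`
with `(a_n)` in the appropriate coefficient ball. -/
def pConv (p : ℝ) (x : ℕ → E) : Set E :=
  {y | ∃ a : ℕ → ℂ, CoefBall p a ∧ HasSum (fun n => a n • x n) y}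

/-- A set is relatively `p`-compact if it is contained in the `p`-convex hull of
some `p`-summable sequence. -/
def RelPCompact (p : ℝ) (K : Set E) : Prop :=
  ∃ x : ℕ → E, Summable (fun n => ‖x n‖ ^ p) ∧ K ⊆ pConv p x

/-- The measure of `p`-compactness of a set `K`. -/
def mKp (p : ℝ) (K : Set E) : ℝ :=
  sInf {r : ℝ | ∃ x : ℕ → E, Summable (fun n => ‖x n‖ ^ p) ∧ K ⊆ pConv p x ∧
    (∑' n, ‖x n‖ ^ p) ^ (1 / p) = r}

end

/-- If `f = S ∘ g` with `g ∈ H^∞_v(U,G)` and `S : G → F` a `p`-compact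
operator, then the `v`-range `(vf)(U)` is relatively `p`-compact, with
`m_{K_p}((vf)(U)) ≤ ‖S‖_{K_p} · ‖g‖_v`. -/
theorem stmt15 {E F G : Type*} [NormedAddCommGroup E] [NormedSpace ℂ E]
    [NormedAddCommGroup F] [NormedSpace ℂ F] [CompleteSpace F]
    [NormedAddCommGroup G] [NormedSpace ℂ G]
    (U : Set E) (hU : IsOpen U) (v : E → ℝ) (hv : ContinuousOn v U)
    (hvpos : ∀ x ∈ U, 0 < v x)
    {p : ℝ} (hp : 1 < p)
    (S : G →L[ℂ] F) (hS : RelPCompact p (S '' Metric.closedBall 0 1))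
    (g : E → G) (hg : DifferentiableOn ℂ g U)
    (hb : BddAbove (Set.range fun x : U => v x.1 * ‖g x.1‖)) :
    RelPCompact p ((fun x => v x • S (g x)) '' U) ∧
      mKp p ((fun x => v x • S (g x)) '' U) ≤
        mKp p (S '' Metric.closedBall 0 1) * ⨆ x : U, v x.1 * ‖g x.1‖ := by
  have hp0 : (0:ℝ) < p := by linarith
  have hpne : p ≠ 0 := ne_of_gt hp0
  have hp1 : p ≠ 1 := ne_of_gt hp
  have hqne : p / (p - 1) ≠ 0 := div_ne_zero hpne (by linarith)
  set M := ⨆ x : U, v x.1 * ‖g x.1‖ with hM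
  set K := (fun x => v x • S (g x)) '' U with hK
  -- nonnegativity of M
  have hMnn : 0 ≤ M := by
    rcases Set.eq_empty_or_nonempty U with h | ⟨x, hx⟩
    · have : IsEmpty ↥U := by rw [h]; exact Set.instIsEmptyElemEmptyCollection E
      rw [hM, Real.iSup_of_isEmpty]
    · exact le_trans (mul_nonneg (hvpos x hx).le (norm_nonneg _)) (le_ciSup hb ⟨x, hx⟩)
  -- bddBelow of the mKp defining sets
  have hbdd : ∀ (K' : Set F), BddBelow {r : ℝ | ∃ x : ℕ → F,
      Summable (fun n => ‖x n‖ ^ p) ∧ K' ⊆ pConv p x ∧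
      (∑' n, ‖x n‖ ^ p) ^ (1 / p) = r} := by
    intro K'
    refine ⟨0, ?_⟩
    rintro r ⟨x, _, _, rfl⟩
    exact Real.rpow_nonneg (tsum_nonneg fun n => Real.rpow_nonneg (norm_nonneg _) _) _
  obtain ⟨y, hy, hSy⟩ := hS
  by_cases hM0 : M = 0
  · -- degenerate case: v x • S (g x) = 0 for all x ∈ U
    have hsub : K ⊆ pConv p (fun _ => (0:F)) := by
      rintro _ ⟨x, hx, rfl⟩
      have hle : v x * ‖g x‖ ≤ M := le_ciSup hb ⟨x, hx⟩
      have hgx : g x = 0 := by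
        have h1 := hvpos x hx
        have h2 := norm_nonneg (g x)
        rw [← norm_eq_zero]
        nlinarith
      refine ⟨fun _ => 0, ?_, ?_⟩
      · unfold CoefBall
        rw [if_neg hp1]
        intro s
        simp [Real.zero_rpow hqne]
      · simp only [hgx, map_zero, smul_zero]
        exact hasSum_zero
    have hsm : Summable (fun n : ℕ => ‖(0:F)‖ ^ p) := by
      simpa [Real.zero_rpow hpne] using (summable_zero : Summable (fun _ : ℕ => (0:ℝ)))
    constructor
    · exact ⟨fun _ => 0, hsm, hsub⟩
    · rw [hM0, mul_zero]
      have hmem : (0:ℝ) ∈ {r : ℝ | ∃ x : ℕ → F,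
          Summable (fun n => ‖x n‖ ^ p) ∧ K ⊆ pConv p x ∧
          (∑' n, ‖x n‖ ^ p) ^ (1 / p) = r} := by
        refine ⟨fun _ => 0, hsm, hsub, ?_⟩
        simp [Real.zero_rpow hpne, Real.zero_rpow (inv_ne_zero hpne), one_div]
      exact csInf_le (hbdd K) hmem
  · have hMpos : 0 < M := lt_of_le_of_ne hMnn (Ne.symm hM0)
    have hMne : M ≠ 0 := ne_of_gt hMpos
    -- key: scaled sequence works for any witness sequence of the ball
    have key : ∀ (y' : ℕ → F), S '' Metric.closedBall 0 1 ⊆ pConv p y' →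
        K ⊆ pConv p (fun n => M • y' n) := by
      intro y' hsub
      rintro _ ⟨x, hx, rfl⟩
      have hle : v x * ‖g x‖ ≤ M := le_ciSup hb ⟨x, hx⟩
      have hmem : M⁻¹ • (v x • g x) ∈ Metric.closedBall (0:G) 1 := by
        rw [mem_closedBall_zero_iff, norm_smul, norm_smul, Real.norm_eq_abs,
          Real.norm_eq_abs, abs_of_nonneg (inv_nonneg.2 hMnn),
          abs_of_nonneg (hvpos x hx).le]
        calc M⁻¹ * (v x * ‖g x‖) ≤ M⁻¹ * M :=
              mul_le_mul_of_nonneg_left hle (inv_nonneg.2 hMnn)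
          _ = 1 := inv_mul_cancel₀ hMne
      obtain ⟨a, ha, hsum⟩ := hsub ⟨_, hmem, rfl⟩
      refine ⟨a, ha, ?_⟩
      have h2 : M • S (M⁻¹ • (v x • g x)) = v x • S (g x) := by
        rw [S.map_smul_of_tower, S.map_smul_of_tower, smul_smul, smul_smul,
          mul_inv_cancel₀ hMne, one_mul]
      have h3 := hsum.const_smul M
      rw [h2] at h3
      have heq : (fun n => a n • (M • y' n)) = fun n => M • (a n • y' n) :=
        funext fun n => smul_comm _ _ _
      exact heq ▸ h3
    -- norms of scaled sequences
    have hnorm : ∀ (y' : ℕ → F) (n : ℕ), ‖M • y' n‖ ^ p = M ^ p * ‖y' n‖ ^ p := by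
      intro y' n
      rw [norm_smul, Real.norm_of_nonneg hMnn, Real.mul_rpow hMnn (norm_nonneg _)]
    have hsm : ∀ (y' : ℕ → F), Summable (fun n => ‖y' n‖ ^ p) →
        Summable (fun n => ‖M • y' n‖ ^ p) := by
      intro y' hy'
      have := hy'.mul_left (M ^ p)
      refine this.congr fun n => ?_
      rw [hnorm]
    -- the claim
    have hclaim : ∀ r ∈ {r : ℝ | ∃ x : ℕ → F,
        Summable (fun n => ‖x n‖ ^ p) ∧ S '' Metric.closedBall 0 1 ⊆ pConv p x ∧
        (∑' n, ‖x n‖ ^ p) ^ (1 / p) = r}, mKp p K ≤ M * r := by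
      rintro _ ⟨y', hy', hsub', rfl⟩
      have hval : (∑' n, ‖M • y' n‖ ^ p) ^ (1 / p)
          = M * (∑' n, ‖y' n‖ ^ p) ^ (1 / p) := by
        rw [tsum_congr (hnorm y'), tsum_mul_left,
          Real.mul_rpow (Real.rpow_nonneg hMnn _)
            (tsum_nonneg fun n => Real.rpow_nonneg (norm_nonneg _) _),
          ← Real.rpow_mul hMnn, mul_one_div_cancel hpne, Real.rpow_one]
      refine csInf_le (hbdd K) ⟨fun n => M • y' n, hsm y' hy', key y' hsub', hval⟩
    constructor
    · exact ⟨fun n => M • y n, hsm y hy, key y hSy⟩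
    · have h4 : mKp p K / M ≤ mKp p (S '' Metric.closedBall 0 1) := by
        unfold mKp
        refine le_csInf ⟨_, ⟨y, hy, hSy, rfl⟩⟩ fun r hr => ?_
        rw [div_le_iff₀ hMpos, mul_comm]
        exact hclaim r hr
      calc mKp p K = (mKp p K / M) * M := by field_simp
        _ ≤ mKp p (S '' Metric.closedBall 0 1) * M :=
            mul_le_mul_of_nonneg_right h4 hMnn
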